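/- Let ((u_i*, x_i*))_i be any minimizer of the primal problem and let p ∈ P⁺. Then the duality gap equals the total lost profit: v − v^D = Σ_i [π_i(p) − (p·x_i* − C_i(u_i*, x_i*))], and each summand π_i(p) − (p·x_i* − C_i(u_i*, x_i*)) is nonnegative. In particular the total uplift payment Σ_i [π_i(p) − (p·x_i* − C_i(u_i*, x_i*))] is the same for every choice of primal minimizer and every p ∈ P⁺. -/
import Mathlib


noncomputable section

/-- Feasible set of a single generator with capacity `xmax`. -/
def Gen (xmax : ℝ) : Set (ℝ × ℝ) :=
  {ux | (ux.1 = 0 ∨ ux.1 = 1) ∧ 0 ≤ ux.2 ∧ ux.2 ≤ ux.1 * xmax}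

/-- Cost of a generator. -/
def Cost (w : ℝ) (c : ℝ → ℝ) (ux : ℝ × ℝ) : ℝ := w * ux.1 + c ux.2

/-- Primal feasible set. -/
def Omega (n : ℕ) (xmax : Fin n → ℝ) (d : ℝ) : Set (Fin n → ℝ × ℝ) :=
  {X | (∀ i, X i ∈ Gen (xmax i)) ∧ ∑ i, (X i).2 = d}

/-- The duality gap equals the total lost profit: for any primal minimizer `X*` and any
`p ∈ P⁺`, `v − v^D = Σ_i [π_i(p) − (p·x_i* − C_i(X_i*))]`, and each summand is
nonnegative.  In particular the total uplift is independent of the choice of `X*`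
and of `p ∈ P⁺`. -/
theorem stmt_8 (n : ℕ) (d : ℝ) (hd : 0 < d)
    (w xmax : Fin n → ℝ) (c : Fin n → ℝ → ℝ)
    (hxmax : ∀ i, 0 < xmax i) (hw : ∀ i, 0 ≤ w i)
    (hconv : ∀ i, ConvexOn ℝ (Set.Icc 0 (xmax i)) (c i))
    (hmono : ∀ i, MonotoneOn (c i) (Set.Icc 0 (xmax i)))
    (hcont : ∀ i, ContinuousOn (c i) (Set.Icc 0 (xmax i)))
    (hc0 : ∀ i, c i 0 = 0)
    (hfeas : d ≤ ∑ i, xmax i)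
    (π : ℝ → Fin n → ℝ)
    (hπ : ∀ p i, IsGreatest ((fun ux => p * ux.2 - Cost (w i) (c i) ux) ''
        Gen (xmax i)) (π p i))
    (v vD : ℝ)
    (hv : IsLeast {r : ℝ | ∃ X ∈ Omega n xmax d,
        r = ∑ i, Cost (w i) (c i) (X i)} v)
    (hvD : IsLUB (Set.range fun p => p * d - ∑ i, π p i) vD)
    (Xs : Fin n → ℝ × ℝ) (hXs : Xs ∈ Omega n xmax d)
    (hXsmin : ∀ X ∈ Omega n xmax d,
      ∑ i, Cost (w i) (c i) (Xs i) ≤ ∑ i, Cost (w i) (c i) (X i))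
    (p : ℝ) (hp : ∀ q, q * d - ∑ i, π q i ≤ p * d - ∑ i, π p i) :
    v - vD = ∑ i, (π p i - (p * (Xs i).2 - Cost (w i) (c i) (Xs i)))
    ∧ ∀ i, 0 ≤ π p i - (p * (Xs i).2 - Cost (w i) (c i) (Xs i)) := by
  have hv' : v = ∑ i, Cost (w i) (c i) (Xs i) := by
    obtain ⟨hvmem, hvlb⟩ := hv
    obtain ⟨X, hX, hvX⟩ := hvmem
    have h1 : v ≤ ∑ i, Cost (w i) (c i) (Xs i) := hvlb ⟨Xs, hXs, rfl⟩
    have h2 : ∑ i, Cost (w i) (c i) (Xs i) ≤ v := hvX ▸ hXsmin X hX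
    linarith
  have hvD' : vD = p * d - ∑ i, π p i := by
    obtain ⟨hub, hlub⟩ := hvD
    have h1 : p * d - ∑ i, π p i ≤ vD := hub ⟨p, rfl⟩
    have h2 : vD ≤ p * d - ∑ i, π p i := hlub (fun r ⟨q, hq⟩ => hq ▸ hp q)
    linarith
  constructor
  · have hsum : ∑ i, (Xs i).2 = d := hXs.2
    rw [hv', hvD', Finset.sum_sub_distrib]
    have : ∑ i, (p * (Xs i).2 - Cost (w i) (c i) (Xs i))
        = p * d - ∑ i, Cost (w i) (c i) (Xs i) := by
      rw [Finset.sum_sub_distrib, ← Finset.mul_sum, hsum]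
    rw [this]; ring
  · intro i
    have := (hπ p i).2 ⟨Xs i, (hXs.1 i), rfl⟩
    simp only at this
    linarith
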